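/- Let (D_{ℓ,j}) for ℓ ∈ ℕ and j ∈ ℕ be independent, identically distributed nonnegative real-valued random variables with mean μ = E[D_{1,1}] > 0, strictly positive variance, finite third absolute moment, and such that P[D_{1,1} ≥ x] < 1 for every x > 0. For r, k ≥ 1 define Q(r,k) = E[Σ_{j=1}^k min_{1≤ℓ≤r} D_{ℓ,j}] / E[min_{1≤ℓ≤r} Σ_{j=1}^k D_{ℓ,j}]. Then the iterated limit lim_{r→∞} lim_{k→∞} Q(r,k) equals 0; that is, for every ε > 0 there exists r₀ such that for every r ≥ r₀ there exists K with Q(r,k) ≤ ε for all k ≥ K. -/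

import Mathlib

open MeasureTheory ProbabilityTheory Filter

section Aux
variable {Ω : Type*} [MeasureSpace Ω] [IsProbabilityMeasure (ℙ : Measure Ω)]

omit [IsProbabilityMeasure (ℙ : Measure Ω)] in
lemma aux_iIndepFun_reindex {ι ι' : Type*} {f : ι → Ω → ℝ}
    (h : iIndepFun f ℙ)
    (g : ι' → ι) (hg : Function.Injective g) :
    iIndepFun (fun i => f (g i)) ℙ := by
  classical
  rw [iIndepFun_iff_measure_inter_preimage_eq_mul] at h ⊢
  intro S sets hsets
  set sets' : ι → Set ℝ := fun i =>
    if hi : ∃ i', i' ∈ S ∧ g i' = i then sets hi.choose else Set.univ with hsets'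
  have key : ∀ i' ∈ S, sets' (g i') = sets i' := by
    intro i' hi'
    have hex : ∃ i'', i'' ∈ S ∧ g i'' = g i' := ⟨i', hi', rfl⟩
    have h2 := hex.choose_spec
    have h3 : hex.choose = i' := hg h2.2
    simp only [hsets', dif_pos hex, h3]
  have h1 := h (S.image g) (sets := sets') ?_
  · have e1 : (⋂ i ∈ S.image g, f i ⁻¹' sets' i) = ⋂ i' ∈ S, f (g i') ⁻¹' sets i' := by
      rw [Finset.set_biInter_finset_image]
      exact Set.iInter₂_congr fun i hi => by rw [key i hi]
    have e2 : (∏ i ∈ S.image g, ℙ (f i ⁻¹' sets' i)) = ∏ i' ∈ S, ℙ (f (g i') ⁻¹' sets i') := by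
      rw [Finset.prod_image (fun a _ b _ hab => hg hab)]
      exact Finset.prod_congr rfl fun i hi => by rw [key i hi]
    rw [e1, e2] at h1
    exact h1
  · intro i hi
    rcases Finset.mem_image.1 hi with ⟨i', hi', rfl⟩
    rw [key i' hi']
    exact hsets i' hi'

lemma aux_integral_prod {Y : ℕ → Ω → ℝ}
    (h : iIndepFun Y ℙ)
    (hm : ∀ i, Measurable (Y i)) (hi : ∀ i, Integrable (Y i) ℙ) (s : Finset ℕ) :
    Integrable (fun ω => ∏ i ∈ s, Y i ω) ℙ ∧
      (∫ ω, ∏ i ∈ s, Y i ω) = ∏ i ∈ s, ∫ ω, Y i ω := by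
  classical
  induction s using Finset.induction_on with
  | empty => simp
  | @insert i s his ih =>
    have hind : IndepFun (Y i) (∏ j ∈ s, Y j) ℙ :=
      (h.indepFun_finsetProd_of_notMem hm his).symm
    have hfe : (∏ j ∈ s, Y j) = fun ω => ∏ j ∈ s, Y j ω := by
      funext ω; exact Finset.prod_apply ω s Y
    have hfe2 : (Y i * ∏ j ∈ s, Y j) = fun ω => Y i ω * ∏ j ∈ s, Y j ω := by
      funext ω; simp [hfe]
    have hPint : Integrable (∏ j ∈ s, Y j) ℙ := by rw [hfe]; exact ih.1
    have hmul : Integrable (Y i * ∏ j ∈ s, Y j) ℙ := hind.integrable_mul (hi i) hPint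
    constructor
    · have h2 : Integrable (fun ω => Y i ω * ∏ j ∈ s, Y j ω) ℙ := by
        rw [← hfe2]; exact hmul
      simpa [Finset.prod_insert his] using h2
    · have hval := hind.integral_mul_eq_mul_integral (hi i).aestronglyMeasurable hPint.aestronglyMeasurable
      rw [hfe2, hfe] at hval
      have e1 : (∫ ω, ∏ j ∈ insert i s, Y j ω) = ∫ ω, Y i ω * ∏ j ∈ s, Y j ω := by
        simp [Finset.prod_insert his]
      rw [e1, hval, ih.2, Finset.prod_insert his]

end Aux

/-- curse of dimensionality for `LB_Box`: For i.i.d. nonnegative random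
variables `D (ℓ, j)` with positive mean, positive variance, finite third absolute moment and
`P[D ≥ x] < 1` for all `x > 0`, the iterated limit of the ratio
`Q(r,k) = E[Σ_{j<k} min_{ℓ<r} D (ℓ,j)] / E[min_{ℓ<r} Σ_{j<k} D (ℓ,j)]`,
first `k → ∞` then `r → ∞`, is `0`. -/
theorem statement2
    {Ω : Type*} [MeasureSpace Ω] [IsProbabilityMeasure (ℙ : Measure Ω)]
    (D : ℕ × ℕ → Ω → ℝ)
    (hmeas : ∀ p, Measurable (D p))
    (hnonneg : ∀ p ω, 0 ≤ D p ω)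
    (hint : ∀ p, Integrable (D p) ℙ)
    (hindep : iIndepFun D ℙ)
    (hident : ∀ p, IdentDistrib (D p) (D (0, 0)) ℙ ℙ)
    (hμpos : 0 < ∫ ω, D (0, 0) ω)
    (hvar : 0 < variance (D (0, 0)) ℙ)
    (hmom3 : Integrable (fun ω => |D (0, 0) ω| ^ 3) ℙ)
    (htail : ∀ x : ℝ, 0 < x → ℙ {ω | x ≤ D (0, 0) ω} < 1)
    (Q : ℕ → ℕ → ℝ)
    (hQ : ∀ r k, Q r k =
        (∫ ω, ∑ j ∈ Finset.range k, ⨅ ℓ : Fin r, D ((ℓ : ℕ), j) ω) /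
          (∫ ω, ⨅ ℓ : Fin r, ∑ j ∈ Finset.range k, D ((ℓ : ℕ), j) ω)) :
    ∀ ε : ℝ, 0 < ε → ∃ r₀ : ℕ, 1 ≤ r₀ ∧ ∀ r : ℕ, r₀ ≤ r →
      ∃ K : ℕ, 1 ≤ K ∧ ∀ k : ℕ, K ≤ k → Q r k ≤ ε := by
  classical
  intro ε hε
  set μR : ℝ := ∫ ω, D (0, 0) ω with hμRdef
  have hμR0 : 0 < μR := hμpos
  have hEint : ∀ p, (∫ ω, D p ω) = μR := fun p => (hident p).integral_eq
  set x : ℝ := ε * μR / 8 with hxdef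
  have hx0 : 0 < x := by positivity
  set pr : ℝ := (ℙ {ω | x ≤ D (0, 0) ω}).toReal with hprdef
  have hpr0 : 0 ≤ pr := ENNReal.toReal_nonneg
  have hpr1 : pr < 1 := by
    have h1 := (ENNReal.toReal_lt_toReal (measure_ne_top _ _) ENNReal.one_ne_top).2
      (htail x hx0)
    simpa using h1
  -- choose r₀
  have htend : Tendsto (fun n => pr ^ n) atTop (nhds 0) :=
    tendsto_pow_atTop_nhds_zero_of_lt_one hpr0 hpr1
  have hev : ∀ᶠ n in atTop, pr ^ n < ε / 8 :=
    htend.eventually (gt_mem_nhds (by positivity))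
  obtain ⟨N₀, hN₀⟩ := eventually_atTop.1 hev
  refine ⟨N₀ + 1, by omega, fun r hr => ?_⟩
  have hr1 : 1 ≤ r := by omega
  have hprr : pr ^ (r - 1) ≤ ε / 8 := (hN₀ (r - 1) (by omega)).le
  -- measurability and integrability of the min
  have hminmeas : ∀ j, Measurable (fun ω => ⨅ ℓ : Fin r, D ((ℓ : ℕ), j) ω) :=
    fun j => Measurable.iInf fun ℓ => hmeas _
  have hminnonneg : ∀ j ω, 0 ≤ ⨅ ℓ : Fin r, D ((ℓ : ℕ), j) ω :=
    fun j ω => Real.iInf_nonneg fun ℓ => hnonneg _ _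
  have hminle0 : ∀ j ω, (⨅ ℓ : Fin r, D ((ℓ : ℕ), j) ω) ≤ D (0, j) ω := by
    intro j ω
    have := ciInf_le (Set.Finite.bddBelow (Set.finite_range
      (fun ℓ : Fin r => D ((ℓ : ℕ), j) ω))) (⟨0, by omega⟩ : Fin r)
    simpa using this
  have hmin_int : ∀ j, Integrable (fun ω => ⨅ ℓ : Fin r, D ((ℓ : ℕ), j) ω) ℙ := by
    intro j
    refine (hint (0, j)).mono' (hminmeas j).aestronglyMeasurable (ae_of_all _ fun ω => ?_)
    rw [Real.norm_eq_abs, abs_of_nonneg (hminnonneg j ω)]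
    exact hminle0 j ω
  -- numerator bound for a single coordinate
  have hnum_j : ∀ j, (∫ ω, ⨅ ℓ : Fin r, D ((ℓ : ℕ), j) ω) ≤ x + μR * pr ^ (r - 1) := by
    intro j
    set φ : ℕ → ℝ → ℝ := fun ℓ y => if ℓ = 0 then y else if x ≤ y then 1 else 0 with hφdef
    have hφmeas : ∀ ℓ, Measurable (φ ℓ) := by
      intro ℓ
      by_cases hℓ : ℓ = 0
      · simpa [hφdef, hℓ] using measurable_id'
      · simp only [hφdef, hℓ, if_false]
        exact Measurable.ite measurableSet_Ici measurable_const measurable_const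
    set Y : ℕ → Ω → ℝ := fun ℓ => φ ℓ ∘ D (ℓ, j) with hYdef
    have hYindep : iIndepFun Y ℙ := by
      have h1 := aux_iIndepFun_reindex hindep (fun ℓ : ℕ => (ℓ, j))
        (fun a b hab => by simpa using congrArg Prod.fst hab)
      exact h1.comp φ hφmeas
    have hYmeas : ∀ ℓ, Measurable (Y ℓ) := fun ℓ => (hφmeas ℓ).comp (hmeas _)
    have hY0 : Y 0 = D (0, j) := by funext ω; simp [hYdef, hφdef]
    have hYind : ∀ ℓ, ℓ ≠ 0 → Y ℓ = fun ω => if x ≤ D (ℓ, j) ω then (1:ℝ) else 0 := by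
      intro ℓ hℓ; funext ω; simp [hYdef, hφdef, hℓ]
    have hYint : ∀ ℓ, Integrable (Y ℓ) ℙ := by
      intro ℓ
      by_cases hℓ : ℓ = 0
      · rw [hℓ, hY0]; exact hint _
      · rw [hYind ℓ hℓ]
        refine (integrable_const (1:ℝ)).mono' ?_ (ae_of_all _ fun ω => ?_)
        · exact (Measurable.ite ((hmeas (ℓ, j)) measurableSet_Ici)
            measurable_const measurable_const).aestronglyMeasurable
        · by_cases h : x ≤ D (ℓ, j) ω <;> simp [h]
    have hprod := aux_integral_prod hYindep hYmeas hYint (Finset.range r)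
    -- pointwise bound
    have key : ∀ ω, (⨅ ℓ : Fin r, D ((ℓ : ℕ), j) ω) ≤ x + ∏ ℓ ∈ Finset.range r, Y ℓ ω := by
      intro ω
      by_cases hcase : ∀ ℓ ∈ Finset.range r, ℓ ≠ 0 → x ≤ D (ℓ, j) ω
      · have hval : ∏ ℓ ∈ Finset.range r, Y ℓ ω = D (0, j) ω := by
          rw [Finset.prod_eq_single_of_mem 0 (Finset.mem_range.2 (by omega))
            (fun b hb hb0 => by simp [hYind b hb0, hcase b hb hb0])]
          simp [hY0]
        rw [hval]
        have := hminle0 j ω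
        linarith
      · push_neg at hcase
        obtain ⟨ℓ0, hmem, hne0, hlt⟩ := hcase
        have hzero : Y ℓ0 ω = 0 := by simp [hYind ℓ0 hne0, not_le.2 hlt]
        rw [Finset.prod_eq_zero hmem hzero]
        have hle : (⨅ ℓ : Fin r, D ((ℓ : ℕ), j) ω) ≤ D (ℓ0, j) ω := by
          have := ciInf_le (Set.Finite.bddBelow (Set.finite_range
            (fun ℓ : Fin r => D ((ℓ : ℕ), j) ω))) (⟨ℓ0, Finset.mem_range.1 hmem⟩ : Fin r)
          simpa using this
        linarith
    have hint1 : Integrable (fun ω => x + ∏ ℓ ∈ Finset.range r, Y ℓ ω) ℙ :=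
      (integrable_const x).add hprod.1
    have hle1 : (∫ ω, ⨅ ℓ : Fin r, D ((ℓ : ℕ), j) ω)
        ≤ ∫ ω, (x + ∏ ℓ ∈ Finset.range r, Y ℓ ω) := by
      exact integral_mono (hmin_int j) hint1 key
    have hEY0 : (∫ ω, Y 0 ω) = μR := by rw [hY0]; exact hEint (0, j)
    have hEYl : ∀ ℓ, ℓ ≠ 0 → (∫ ω, Y ℓ ω) = pr := by
      intro ℓ hℓ
      have hgm : Measurable (fun y : ℝ => if x ≤ y then (1:ℝ) else 0) :=
        Measurable.ite measurableSet_Ici measurable_const measurable_const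
      have h2 : (∫ ω, Y ℓ ω)
          = ∫ ω, ((fun y : ℝ => if x ≤ y then (1:ℝ) else 0) ∘ D (0, 0)) ω := by
        rw [hYind ℓ hℓ]
        exact ((hident (ℓ, j)).comp hgm).integral_eq
      have h3 : ((fun y : ℝ => if x ≤ y then (1:ℝ) else 0) ∘ D (0, 0))
          = Set.indicator {ω | x ≤ D (0, 0) ω} (fun _ => (1:ℝ)) := by
        funext ω
        by_cases h : x ≤ D (0, 0) ω <;>
          simp [Function.comp, h, Set.indicator_apply, Set.mem_setOf_eq]
      have hms : MeasurableSet {ω | x ≤ D (0, 0) ω} := (hmeas (0, 0)) measurableSet_Ici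
      rw [h2, h3, integral_indicator_const (1:ℝ) hms]
      simp [hprdef, measureReal_def]
    have hprodval : (∏ ℓ ∈ Finset.range r, ∫ ω, Y ℓ ω) = μR * pr ^ (r - 1) := by
      rw [← Finset.mul_prod_erase _ _ (Finset.mem_range.2 (show 0 < r by omega))]
      rw [hEY0]
      congr 1
      rw [Finset.prod_congr rfl (fun ℓ hℓ => hEYl ℓ (Finset.ne_of_mem_erase hℓ)),
        Finset.prod_const, Finset.card_erase_of_mem (Finset.mem_range.2 (by omega)),
        Finset.card_range]
    calc (∫ ω, ⨅ ℓ : Fin r, D ((ℓ : ℕ), j) ω)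
        ≤ ∫ ω, (x + ∏ ℓ ∈ Finset.range r, Y ℓ ω) := hle1
      _ = x + ∫ ω, ∏ ℓ ∈ Finset.range r, Y ℓ ω := by
          rw [integral_add (integrable_const x) hprod.1]; simp
      _ = x + μR * pr ^ (r - 1) := by rw [hprod.2, hprodval]
  -- choose K
  set σ2 : ℝ := variance (D (0, 0)) ℙ with hσ2def
  have hσ2nonneg : 0 ≤ σ2 := variance_nonneg _ _
  refine ⟨max 1 (Nat.ceil (8 * r * σ2 / μR ^ 2) + 1), le_max_left _ _, fun k hk => ?_⟩
  have hk1 : 1 ≤ k := le_trans (le_max_left _ _) hk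
  have hkpos : (0:ℝ) < k := by exact_mod_cast Nat.lt_of_lt_of_le Nat.zero_lt_one hk1
  have hkc : 8 * r * σ2 / μR ^ 2 ≤ (k : ℝ) := by
    have h1 : (Nat.ceil (8 * r * σ2 / μR ^ 2) : ℝ) ≤ k := by
      have := le_trans (le_max_right 1 (Nat.ceil (8 * r * σ2 / μR ^ 2) + 1)) hk
      exact_mod_cast le_trans (Nat.le_succ _) this
    exact le_trans (Nat.le_ceil _) h1
  -- memℒp 2
  have hsq : Integrable (fun ω => D (0, 0) ω ^ 2) ℙ := by
    refine (hmom3.add (integrable_const 1)).mono'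
      ((hmeas (0, 0)).pow_const 2).aestronglyMeasurable (ae_of_all _ fun ω => ?_)
    have h0 := hnonneg (0, 0) ω
    rw [Real.norm_eq_abs, abs_of_nonneg (by positivity), Pi.add_apply,
      abs_of_nonneg h0]
    rcases le_total (D (0, 0) ω) 1 with h | h
    · nlinarith
    · nlinarith
  have hL2 : ∀ p, MemLp (D p) 2 ℙ := by
    intro p
    have h00 : MemLp (D (0, 0)) 2 ℙ :=
      (memLp_two_iff_integrable_sq (hmeas (0, 0)).aestronglyMeasurable).2 hsq
    exact (hident p).memLp_iff.2 h00
  -- the sums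
  set S : ℕ → Ω → ℝ := fun ℓ ω => ∑ j ∈ Finset.range k, D (ℓ, j) ω with hSdef
  have hSmeas : ∀ ℓ, Measurable (S ℓ) := by
    intro ℓ; exact Finset.measurable_sum _ fun j _ => hmeas _
  have hSint : ∀ ℓ, Integrable (S ℓ) ℙ := by
    intro ℓ; exact integrable_finset_sum _ fun j _ => hint _
  have hSnonneg : ∀ ℓ ω, 0 ≤ S ℓ ω :=
    fun ℓ ω => Finset.sum_nonneg fun j _ => hnonneg _ _
  have hES : ∀ ℓ, (∫ ω, S ℓ ω) = k * μR := by
    intro ℓ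
    rw [hSdef]
    rw [integral_finset_sum _ fun j _ => hint _]
    rw [Finset.sum_congr rfl fun j _ => hEint (ℓ, j), Finset.sum_const, Finset.card_range,
      nsmul_eq_mul]
  have hSL2 : ∀ ℓ, MemLp (S ℓ) 2 ℙ :=
    fun ℓ => memLp_finsetSum _ fun j _ => hL2 (ℓ, j)
  have hvarS : ∀ ℓ, variance (S ℓ) ℙ = k * σ2 := by
    intro ℓ
    have hfe : S ℓ = ∑ j ∈ Finset.range k, D (ℓ, j) := by
      funext ω; rw [hSdef]; exact (Finset.sum_apply ω (Finset.range k) _).symm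
    rw [hfe, IndepFun.variance_sum (fun j _ => hL2 (ℓ, j))
      (fun j _ j' _ hjj' => hindep.indepFun (by simp [Prod.ext_iff, hjj']))]
    rw [Finset.sum_congr rfl fun j _ => (hident (ℓ, j)).variance_eq, Finset.sum_const,
      Finset.card_range, nsmul_eq_mul]
  -- Chebyshev
  have hcpos : (0:ℝ) < k * μR / 2 := by positivity
  have hbad : ∀ ℓ, ℙ {ω | S ℓ ω < k * μR / 2} ≤ ENNReal.ofReal (4 * σ2 / (k * μR ^ 2)) := by
    intro ℓ
    have hcheb := meas_ge_le_variance_div_sq (hSL2 ℓ) hcpos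
    have hsub : {ω | S ℓ ω < k * μR / 2} ⊆ {ω | k * μR / 2 ≤ |S ℓ ω - (∫ ω', S ℓ ω')|} := by
      intro ω hω
      simp only [Set.mem_setOf_eq] at hω ⊢
      rw [hES ℓ]
      have : k * μR / 2 ≤ k * μR - S ℓ ω := by linarith
      calc k * μR / 2 ≤ k * μR - S ℓ ω := this
        _ ≤ |S ℓ ω - k * μR| := by rw [abs_sub_comm]; exact le_abs_self _
    refine le_trans (measure_mono hsub) (le_trans hcheb (le_of_eq ?_))
    congr 1
    rw [hvarS ℓ]
    field_simp
    ring
  -- the good event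
  set A : Set Ω := ⋂ ℓ : Fin r, {ω | k * μR / 2 ≤ S (ℓ : ℕ) ω} with hAdef
  have hAmeas : MeasurableSet A :=
    MeasurableSet.iInter fun ℓ => measurableSet_le measurable_const (hSmeas _)
  have hAc : ℙ Aᶜ ≤ ENNReal.ofReal (1 / 2) := by
    have h1 : Aᶜ = ⋃ ℓ : Fin r, {ω | k * μR / 2 ≤ S (ℓ : ℕ) ω}ᶜ := by
      rw [hAdef, Set.compl_iInter]
    have h2 : ∀ ℓ : Fin r, {ω | k * μR / 2 ≤ S (ℓ : ℕ) ω}ᶜ = {ω | S (ℓ : ℕ) ω < k * μR / 2} := by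
      intro ℓ; ext ω; simp [not_le]
    rw [h1]
    calc ℙ (⋃ ℓ : Fin r, {ω | k * μR / 2 ≤ S (ℓ : ℕ) ω}ᶜ)
        ≤ ∑' ℓ : Fin r, ℙ ({ω | k * μR / 2 ≤ S (ℓ : ℕ) ω}ᶜ) := measure_iUnion_le _
      _ = ∑ ℓ : Fin r, ℙ ({ω | k * μR / 2 ≤ S (ℓ : ℕ) ω}ᶜ) := tsum_fintype _
      _ ≤ ∑ ℓ : Fin r, ENNReal.ofReal (4 * σ2 / (k * μR ^ 2)) := by
          refine Finset.sum_le_sum fun ℓ _ => ?_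
          rw [h2 ℓ]; exact hbad _
      _ = r * ENNReal.ofReal (4 * σ2 / (k * μR ^ 2)) := by
          rw [Finset.sum_const, Finset.card_univ, Fintype.card_fin, nsmul_eq_mul]
      _ = ENNReal.ofReal (r * (4 * σ2 / (k * μR ^ 2))) := by
          rw [ENNReal.ofReal_mul (by positivity)]
          congr 1
          simp [ENNReal.ofReal_natCast]
      _ ≤ ENNReal.ofReal (1 / 2) := by
          apply ENNReal.ofReal_le_ofReal
          rw [mul_div_assoc']
          rw [div_le_iff₀ (by positivity)]
          have h3 : 8 * r * σ2 ≤ k * μR ^ 2 := by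
            have h4 : 0 < μR ^ 2 := by positivity
            calc 8 * r * σ2 = 8 * r * σ2 / μR ^ 2 * μR ^ 2 := by field_simp
              _ ≤ k * μR ^ 2 := by
                  apply mul_le_mul_of_nonneg_right hkc h4.le
          nlinarith
  have hA : (1:ℝ) / 2 ≤ (ℙ A).toReal := by
    have h1 : ℙ A + ℙ Aᶜ = 1 := (measure_add_measure_compl hAmeas).trans measure_univ
    have h2 : (ℙ A).toReal + (ℙ Aᶜ).toReal = 1 := by
      rw [← ENNReal.toReal_add (measure_ne_top _ _) (measure_ne_top _ _), h1]
      simp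
    have h3 : (ℙ Aᶜ).toReal ≤ 1 / 2 := by
      have := ENNReal.toReal_mono ENNReal.ofReal_ne_top hAc
      rwa [ENNReal.toReal_ofReal (by norm_num)] at this
    linarith
  -- denominator bound
  have hinfS_meas : Measurable (fun ω => ⨅ ℓ : Fin r, S (ℓ : ℕ) ω) :=
    Measurable.iInf fun ℓ => hSmeas _
  have hinfS_nonneg : ∀ ω, 0 ≤ ⨅ ℓ : Fin r, S (ℓ : ℕ) ω :=
    fun ω => Real.iInf_nonneg fun ℓ => hSnonneg _ _
  have hinfS_le : ∀ ω, (⨅ ℓ : Fin r, S (ℓ : ℕ) ω) ≤ S 0 ω := by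
    intro ω
    have := ciInf_le (Set.Finite.bddBelow (Set.finite_range
      (fun ℓ : Fin r => S (ℓ : ℕ) ω))) (⟨0, by omega⟩ : Fin r)
    simpa using this
  have hinfS_int : Integrable (fun ω => ⨅ ℓ : Fin r, S (ℓ : ℕ) ω) ℙ := by
    refine (hSint 0).mono' hinfS_meas.aestronglyMeasurable (ae_of_all _ fun ω => ?_)
    rw [Real.norm_eq_abs, abs_of_nonneg (hinfS_nonneg ω)]
    exact hinfS_le ω
  have hptw : ∀ ω, Set.indicator A (fun _ => k * μR / 2) ω ≤ ⨅ ℓ : Fin r, S (ℓ : ℕ) ω := by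
    intro ω
    by_cases hω : ω ∈ A
    · rw [Set.indicator_of_mem hω]
      haveI : Nonempty (Fin r) := ⟨⟨0, by omega⟩⟩
      exact le_ciInf fun ℓ => Set.mem_iInter.1 hω ℓ
    · rw [Set.indicator_of_notMem hω]
      exact hinfS_nonneg ω
  have hDen : k * μR / 4 ≤ ∫ ω, ⨅ ℓ : Fin r, S (ℓ : ℕ) ω := by
    have h1 : (∫ ω, Set.indicator A (fun _ => k * μR / 2) ω) ≤ ∫ ω, ⨅ ℓ : Fin r, S (ℓ : ℕ) ω :=
      integral_mono ((integrable_const _).indicator hAmeas) hinfS_int hptw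
    have h2 : (∫ ω, Set.indicator A (fun _ => k * μR / 2) ω) = (ℙ A).toReal * (k * μR / 2) := by
      rw [integral_indicator_const _ hAmeas]; simp [smul_eq_mul, measureReal_def]
    have h3 : k * μR / 4 ≤ (ℙ A).toReal * (k * μR / 2) := by
      calc k * μR / 4 = (1 / 2) * (k * μR / 2) := by ring
        _ ≤ (ℙ A).toReal * (k * μR / 2) := by
            apply mul_le_mul_of_nonneg_right hA (by positivity)
    linarith [h2 ▸ h1]
  -- assemble
  have hnum : (∫ ω, ∑ j ∈ Finset.range k, ⨅ ℓ : Fin r, D ((ℓ : ℕ), j) ω)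
      ≤ k * (x + μR * pr ^ (r - 1)) := by
    rw [integral_finset_sum _ fun j _ => hmin_int j]
    calc (∑ j ∈ Finset.range k, ∫ ω, ⨅ ℓ : Fin r, D ((ℓ : ℕ), j) ω)
        ≤ ∑ j ∈ Finset.range k, (x + μR * pr ^ (r - 1)) :=
          Finset.sum_le_sum fun j _ => hnum_j j
      _ = k * (x + μR * pr ^ (r - 1)) := by
          rw [Finset.sum_const, Finset.card_range, nsmul_eq_mul]
  have hnum2 : k * (x + μR * pr ^ (r - 1)) ≤ ε * (k * μR / 4) := by
    have h1 : μR * pr ^ (r - 1) ≤ μR * (ε / 8) :=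
      mul_le_mul_of_nonneg_left hprr hμR0.le
    have h2 : x + μR * pr ^ (r - 1) ≤ ε * μR / 4 := by
      rw [hxdef]; linarith
    calc (k:ℝ) * (x + μR * pr ^ (r - 1)) ≤ k * (ε * μR / 4) :=
          mul_le_mul_of_nonneg_left h2 (by positivity)
      _ = ε * (k * μR / 4) := by ring
  have hDenpos : 0 < ∫ ω, ⨅ ℓ : Fin r, S (ℓ : ℕ) ω :=
    lt_of_lt_of_le (by positivity) hDen
  rw [hQ r k]
  have hgoal : (∫ ω, ⨅ ℓ : Fin r, ∑ j ∈ Finset.range k, D ((ℓ : ℕ), j) ω)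
      = ∫ ω, ⨅ ℓ : Fin r, S (ℓ : ℕ) ω := rfl
  rw [hgoal, div_le_iff₀ hDenpos]
  calc (∫ ω, ∑ j ∈ Finset.range k, ⨅ ℓ : Fin r, D ((ℓ : ℕ), j) ω)
      ≤ k * (x + μR * pr ^ (r - 1)) := hnum
    _ ≤ ε * (k * μR / 4) := hnum2
    _ ≤ ε * ∫ ω, ⨅ ℓ : Fin r, S (ℓ : ℕ) ω :=
        mul_le_mul_of_nonneg_left hDen hε.le
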